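/- Let Λ be a constant n×n complex matrix and let W : ℝ → Matrix (Fin n) (Fin n) ℂ satisfy W′(t) = A(t)·W(t) − W(t)·Λ for all t (in the sense of HasDerivAt). Then W(t)·exp(t·Λ) = Φ(t)·W(0) for every t ∈ ℝ. Moreover, if W(0) is invertible then W(t) is invertible for every t, so that the transition matrix admits the Floquet factorization Φ(t) = W(t)·exp(t·Λ)·W(0)⁻¹. -/

import Mathlib

section ExpEntry
attribute [local instance] Matrix.linftyOpNormedRing Matrix.linftyOpNormedAlgebra

lemma entry_exp_hasDerivAt (n : ℕ) (Λ : Matrix (Fin n) (Fin n) ℂ) (t : ℝ) (i j : Fin n) :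
    HasDerivAt (fun s : ℝ => (NormedSpace.exp ((s : ℂ) • Λ)) i j)
      ((Λ * NormedSpace.exp ((t : ℂ) • Λ)) i j) t := by
  have h1 : HasDerivAt (fun z : ℂ => NormedSpace.exp (z • Λ))
      (Λ * NormedSpace.exp ((t : ℂ) • Λ)) (t : ℂ) := hasDerivAt_exp_smul_const' Λ (t : ℂ)
  have h2 : HasDerivAt (fun s : ℝ => NormedSpace.exp ((s : ℂ) • Λ))
      (Λ * NormedSpace.exp ((t : ℂ) • Λ)) t := by
    have := HasDerivAt.scomp t h1 Complex.ofRealCLM.hasDerivAt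
    simp [Function.comp_def] at this ⊢
    exact this
  let L : Matrix (Fin n) (Fin n) ℂ →L[ℝ] ℂ :=
    ((Matrix.entryLinearMap ℂ ℂ i j).toContinuousLinearMap).restrictScalars ℝ
  have := L.hasFDerivAt.comp_hasDerivAt t h2
  simp [L, Matrix.entryLinearMap, Function.comp_def] at this ⊢
  exact this

end ExpEntry

attribute [local instance] Matrix.normedAddCommGroup Matrix.normedSpace

open Matrix

namespace FloquetAux

variable {n : ℕ}

lemma entry_hasDerivAt {f f' : ℝ → Matrix (Fin n) (Fin n) ℂ} {t : ℝ}
    (hf : HasDerivAt f (f' t) t) (i j : Fin n) :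
    HasDerivAt (fun s => f s i j) (f' t i j) t :=
  hasDerivAt_pi.1 (hasDerivAt_pi.1 hf i) j

lemma pi_hasDerivAt {f : ℝ → Matrix (Fin n) (Fin n) ℂ} {f' : Matrix (Fin n) (Fin n) ℂ} {t : ℝ}
    (hf : ∀ i j, HasDerivAt (fun s => f s i j) (f' i j) t) :
    HasDerivAt f f' t :=
  hasDerivAt_pi.2 fun i => hasDerivAt_pi.2 fun j => hf i j

lemma matrix_mul_hasDerivAt {f g : ℝ → Matrix (Fin n) (Fin n) ℂ}
    {f' g' : Matrix (Fin n) (Fin n) ℂ} {t : ℝ}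
    (hf : HasDerivAt f f' t) (hg : HasDerivAt g g' t) :
    HasDerivAt (fun s => f s * g s) (f' * g t + f t * g') t := by
  apply pi_hasDerivAt
  intro i j
  have h : HasDerivAt (fun s => ∑ k, f s i k * g s k j)
      (∑ k, (f' i k * g t k j + f t i k * g' k j)) t := by
    refine HasDerivAt.fun_sum fun k _ => ?_
    exact (entry_hasDerivAt (f' := fun _ => f') hf i k).mul
      (entry_hasDerivAt (f' := fun _ => g') hg k j)
  simpa [Matrix.mul_apply, Matrix.add_apply, Finset.sum_add_distrib] using h

lemma exp_hasDerivAt (Λ : Matrix (Fin n) (Fin n) ℂ) (t : ℝ) :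
    HasDerivAt (fun s : ℝ => NormedSpace.exp ((s : ℂ) • Λ))
      (Λ * NormedSpace.exp ((t : ℂ) • Λ)) t :=
  pi_hasDerivAt fun i j => entry_exp_hasDerivAt n Λ t i j

lemma norm_matrix_mul_le (M N : Matrix (Fin n) (Fin n) ℂ) :
    ‖M * N‖ ≤ (n : ℝ) * ‖M‖ * ‖N‖ := by
  rw [Matrix.norm_le_iff (by positivity)]
  intro i j
  calc ‖(M * N) i j‖ = ‖∑ k, M i k * N k j‖ := by rw [Matrix.mul_apply]
    _ ≤ ∑ k, ‖M i k * N k j‖ := norm_sum_le _ _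
    _ ≤ ∑ _k : Fin n, ‖M‖ * ‖N‖ := by
        refine Finset.sum_le_sum fun k _ => ?_
        rw [norm_mul]
        exact mul_le_mul (Matrix.norm_entry_le_entrywise_sup_norm M)
          (Matrix.norm_entry_le_entrywise_sup_norm N) (norm_nonneg _) (norm_nonneg _)
    _ = (n : ℝ) * ‖M‖ * ‖N‖ := by simp [Finset.sum_const, mul_assoc]

lemma ode_zero_nonneg (A : ℝ → Matrix (Fin n) (Fin n) ℂ) (hA : Continuous A)
    (g : ℝ → Matrix (Fin n) (Fin n) ℂ)
    (hg : ∀ t, HasDerivAt g (A t * g t) t) (h0 : g 0 = 0) {t : ℝ} (ht : 0 ≤ t) :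
    g t = 0 := by
  obtain ⟨C, hC⟩ := (isCompact_Icc (a := (0:ℝ)) (b := t)).exists_bound_of_continuousOn
    hA.continuousOn
  set K : ℝ := (n : ℝ) * max C 0 with hK
  have hgc : Continuous g := continuous_iff_continuousAt.2 fun s => (hg s).continuousAt
  have key := norm_le_gronwallBound_of_norm_deriv_right_le (f := g)
    (f' := fun s => A s * g s) (δ := 0) (K := K) (ε := 0) (a := 0) (b := t)
    hgc.continuousOn (fun x _ => (hg x).hasDerivWithinAt)
    (by simp [h0])
    (fun x hx => by
      have hx' : x ∈ Set.Icc (0:ℝ) t := Set.Ico_subset_Icc_self hx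
      calc ‖A x * g x‖ ≤ (n : ℝ) * ‖A x‖ * ‖g x‖ := norm_matrix_mul_le _ _
        _ ≤ K * ‖g x‖ + 0 := by
            rw [add_zero, hK]
            refine mul_le_mul_of_nonneg_right ?_ (norm_nonneg _)
            exact mul_le_mul_of_nonneg_left (le_max_of_le_left (hC x hx')) (by positivity))
  have h := key t (Set.right_mem_Icc.2 ht)
  rw [gronwallBound_ε0] at h
  simpa using norm_le_zero_iff.1 (by simpa using h)

lemma ode_zero (A : ℝ → Matrix (Fin n) (Fin n) ℂ) (hA : Continuous A)
    (g : ℝ → Matrix (Fin n) (Fin n) ℂ)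
    (hg : ∀ t, HasDerivAt g (A t * g t) t) (h0 : g 0 = 0) (t : ℝ) :
    g t = 0 := by
  rcases le_or_gt 0 t with ht | ht
  · exact ode_zero_nonneg A hA g hg h0 ht
  · have hA' : Continuous fun s => -(A (-s)) := (hA.comp continuous_neg).neg
    have hg' : ∀ s : ℝ, HasDerivAt (fun u => g (-u)) (-(A (-s)) * g (-s)) s := by
      intro s
      have := (hg (-s)).scomp s (hasDerivAt_neg s)
      simp [neg_mul, Function.comp_def] at this ⊢
      exact this
    have := ode_zero_nonneg _ hA' (fun u => g (-u)) hg' (by simpa using h0)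
      (t := -t) (by linarith)
    simpa using this

end FloquetAux

open FloquetAux

/-- If `W′(t) = A(t)W(t) − W(t)Λ` then `W(t)·exp(tΛ) = Φ(t)·W(0)`; moreover if `W(0)` is
invertible then so is every `W(t)`, and `Φ(t) = W(t)·exp(tΛ)·W(0)⁻¹` (Floquet factorization). -/
theorem floquet_factorization
    (T : ℝ) (hT : 0 < T) (n : ℕ) (hn : 1 ≤ n)
    (A Φ : ℝ → Matrix (Fin n) (Fin n) ℂ)
    (hA : Continuous A) (hAper : ∀ t : ℝ, A (t + T) = A t)
    (hΦ0 : Φ 0 = 1) (hΦ : ∀ t : ℝ, HasDerivAt Φ (A t * Φ t) t)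
    (Λ : Matrix (Fin n) (Fin n) ℂ)
    (W : ℝ → Matrix (Fin n) (Fin n) ℂ)
    (hW : ∀ t : ℝ, HasDerivAt W (A t * W t - W t * Λ) t) :
    (∀ t : ℝ, W t * NormedSpace.exp ((t : ℂ) • Λ) = Φ t * W 0)
    ∧ (IsUnit (W 0) → ∀ t : ℝ,
        IsUnit (W t) ∧ Φ t = W t * NormedSpace.exp ((t : ℂ) • Λ) * (W 0)⁻¹) := by
  set E : ℝ → Matrix (Fin n) (Fin n) ℂ := fun s => NormedSpace.exp ((s : ℂ) • Λ) with hE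
  -- the difference satisfies the homogeneous linear ODE
  set g : ℝ → Matrix (Fin n) (Fin n) ℂ := fun s => W s * E s - Φ s * W 0 with hgdef
  have hg : ∀ t, HasDerivAt g (A t * g t) t := by
    intro t
    have h1 := matrix_mul_hasDerivAt (hW t) (exp_hasDerivAt Λ t)
    have h2 := matrix_mul_hasDerivAt (hΦ t) (hasDerivAt_const t (W 0))
    have h3 := h1.sub h2
    have heq : (A t * W t - W t * Λ) * E t + W t * (Λ * E t)
        - ((A t * Φ t) * W 0 + Φ t * 0) = A t * g t := by
      simp only [hgdef, mul_zero, add_zero, sub_mul, mul_sub, mul_assoc]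
      abel
    rw [heq] at h3
    exact h3
  have h0 : g 0 = 0 := by
    simp [hgdef, hE, hΦ0, NormedSpace.exp_zero]
  have heq : ∀ t : ℝ, W t * E t = Φ t * W 0 := by
    intro t
    have := ode_zero A hA g hg h0 t
    rw [hgdef] at this
    exact sub_eq_zero.1 this
  refine ⟨heq, ?_⟩
  -- Φ t is invertible for all t
  have hΦunit : ∀ t : ℝ, IsUnit (Φ t) := by
    intro t0
    by_contra h
    rw [Matrix.isUnit_iff_isUnit_det, isUnit_iff_ne_zero, not_not] at h
    obtain ⟨v, hv, hv0⟩ := (Matrix.exists_mulVec_eq_zero_iff).2 h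
    set B : Matrix (Fin n) (Fin n) ℂ := Matrix.of fun i (_ : Fin n) => v i with hB
    have hAc : Continuous fun s => A (s + t0) := hA.comp (continuous_id.add continuous_const)
    have hg2 : ∀ s : ℝ, HasDerivAt (fun u => Φ (u + t0) * B)
        (A (s + t0) * (Φ (s + t0) * B)) s := by
      intro s
      have hshift : HasDerivAt (fun u : ℝ => Φ (u + t0)) (A (s + t0) * Φ (s + t0)) s := by
        have := (hΦ (s + t0)).scomp s ((hasDerivAt_id s).add_const t0)
        simp [Function.comp_def] at this ⊢
        exact this
      have := matrix_mul_hasDerivAt hshift (hasDerivAt_const s B)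
      simpa [mul_assoc] using this
    have h20 : Φ (0 + t0) * B = 0 := by
      ext i j
      have := congrFun hv0 i
      simp only [Matrix.mulVec, dotProduct, Pi.zero_apply] at this
      simp [hB, Matrix.mul_apply, this]
    have := ode_zero _ hAc (fun u => Φ (u + t0) * B) hg2 h20 (-t0)
    rw [show (-t0 + t0 : ℝ) = 0 by ring, hΦ0, one_mul] at this
    apply hv
    funext i
    have := congrFun (congrFun this i) ⟨0, hn⟩
    simpa [hB] using this
  intro hW0 t
  have hdW0 : IsUnit (W 0).det := (Matrix.isUnit_iff_isUnit_det _).1 hW0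
  have hdΦ : IsUnit (Φ t).det := (Matrix.isUnit_iff_isUnit_det _).1 (hΦunit t)
  have hdet : (W t).det * (E t).det = (Φ t).det * (W 0).det := by
    rw [← Matrix.det_mul, ← Matrix.det_mul, heq t]
  have hWt : IsUnit (W t) := by
    rw [Matrix.isUnit_iff_isUnit_det, isUnit_iff_ne_zero]
    intro hzero
    rw [isUnit_iff_ne_zero] at hdW0 hdΦ
    have : (Φ t).det * (W 0).det = 0 := by rw [← hdet, hzero, zero_mul]
    exact (mul_ne_zero hdΦ hdW0) this
  refine ⟨hWt, ?_⟩
  calc Φ t = Φ t * (W 0 * (W 0)⁻¹) := by rw [Matrix.mul_nonsing_inv _ hdW0, mul_one]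
    _ = Φ t * W 0 * (W 0)⁻¹ := by rw [mul_assoc]
    _ = W t * E t * (W 0)⁻¹ := by rw [heq t]
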